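/- Bogolyubov's lemma: Let G be a finite additive (abelian) group, let δ > 0, and let A ⊆ G satisfy |A| ≥ δ|G|. Then there exists a set S ⊆ Ĝ with |S| ≤ 2δ^{−2} such that B(S, 1/4) ⊆ 2A − 2A, where 2A − 2A := {a₁ + a₂ − a₃ − a₄ : a₁, a₂, a₃, a₄ ∈ A}. -/

import Mathlib

/-- The Bohr set `B(S,ρ) = {x ∈ G : ‖ξ·x‖_{ℝ/ℤ} < ρ for all ξ ∈ S}`, where `S` is a finite
set of characters (homomorphisms `G → ℝ/ℤ`) and the norm on `ℝ/ℤ` is the distance to the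
nearest integer. -/
def bohr {G : Type*} [AddCommGroup G] (S : Finset (G →+ AddCircle (1 : ℝ))) (ρ : ℝ) : Set G :=
  {x | ∀ ξ ∈ S, ‖ξ x‖ < ρ}

namespace BogolyubovAux

open Complex Finset
open scoped ComplexConjugate

variable {G : Type*} [AddCommGroup G]

/-- The complex character value `e(ξ·x)`. -/
noncomputable def E (ξ : G →+ AddCircle (1 : ℝ)) (x : G) : ℂ :=
  (AddCircle.toCircle (ξ x) : ℂ)

lemma E_zero (ξ : G →+ AddCircle (1 : ℝ)) : E ξ 0 = 1 := by
  simp [E]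

lemma E_add (ξ : G →+ AddCircle (1 : ℝ)) (x y : G) : E ξ (x + y) = E ξ x * E ξ y := by
  simp [E, map_add, AddCircle.toCircle_add]

lemma E_apply_zero (x : G) : E (0 : G →+ AddCircle (1 : ℝ)) x = 1 := by
  simp [E]

lemma E_addchar (ξ χ : G →+ AddCircle (1 : ℝ)) (x : G) :
    E (ξ + χ) x = E ξ x * E χ x := by
  simp [E, AddCircle.toCircle_add]

lemma E_abs (ξ : G →+ AddCircle (1 : ℝ)) (x : G) : ‖E ξ x‖ = 1 :=
  Circle.norm_coe _

lemma E_ne_zero (ξ : G →+ AddCircle (1 : ℝ)) (x : G) : E ξ x ≠ 0 :=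
  Circle.coe_ne_zero _

lemma E_mul_neg (ξ : G →+ AddCircle (1 : ℝ)) (x : G) : E ξ x * E ξ (-x) = 1 := by
  rw [← E_add]; simp [E_zero]

lemma conj_E (ξ : G →+ AddCircle (1 : ℝ)) (x : G) : conj (E ξ x) = E ξ (-x) := by
  apply mul_left_cancel₀ (E_ne_zero ξ x)
  rw [E_mul_neg, Complex.mul_conj]
  norm_cast
  simp [E]

/-- Convert a homomorphism `G →+ AddCircle 1` to an additive character with values in `Circle`. -/
noncomputable def homAddChar (ξ : G →+ AddCircle (1 : ℝ)) : AddChar G Circle where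
  toFun x := AddCircle.toCircle (ξ x)
  map_zero_eq_one' := by simp
  map_add_eq_mul' a b := by simp [AddCircle.toCircle_add]

lemma homAddChar_injective : Function.Injective (homAddChar (G := G)) := by
  intro ξ χ h
  ext x
  exact AddCircle.injective_toCircle one_ne_zero (DFunLike.congr_fun h x)

variable [Fintype G]

/-- The injection into `AddChar G ℂ`. -/
noncomputable def toC (ξ : G →+ AddCircle (1 : ℝ)) : AddChar G ℂ :=
  AddChar.circleEquivComplex (homAddChar ξ)

lemma toC_injective : Function.Injective (toC (G := G)) :=
  AddChar.circleEquivComplex.injective.comp homAddChar_injective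

noncomputable instance : Fintype (G →+ AddCircle (1 : ℝ)) :=
  Fintype.ofInjective toC toC_injective

lemma card_dual_le :
    Fintype.card (G →+ AddCircle (1 : ℝ)) ≤ Fintype.card G := by
  have h := Fintype.card_le_of_injective toC (toC_injective (G := G))
  simpa [AddChar.card_eq] using h

lemma toCircle_symm (z : Circle) :
    AddCircle.toCircle ((AddCircle.homeomorphCircle (one_ne_zero (α := ℝ))).symm z) = z := by
  rw [← AddCircle.homeomorphCircle_apply one_ne_zero, Homeomorph.apply_symm_apply]

/-- Convert a `Circle`-valued additive character to a homomorphism `G →+ AddCircle 1`. -/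
noncomputable def ofChar (ψ : AddChar G Circle) : G →+ AddCircle (1 : ℝ) where
  toFun x := (AddCircle.homeomorphCircle (one_ne_zero (α := ℝ))).symm (ψ x)
  map_zero' := by
    apply AddCircle.injective_toCircle (one_ne_zero (α := ℝ))
    rw [toCircle_symm]
    simp
  map_add' a b := by
    apply AddCircle.injective_toCircle (one_ne_zero (α := ℝ))
    rw [toCircle_symm, AddCircle.toCircle_add, toCircle_symm, toCircle_symm,
      AddChar.map_add_eq_mul]

lemma exists_E_ne_one {x : G} (hx : x ≠ 0) :
    ∃ ξ : G →+ AddCircle (1 : ℝ), E ξ x ≠ 1 := by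
  obtain ⟨ψ, hψ⟩ := AddChar.exists_apply_ne_zero.mpr hx
  refine ⟨ofChar (AddChar.circleEquivComplex.symm ψ), ?_⟩
  have h1 : E (ofChar (AddChar.circleEquivComplex.symm ψ)) x
      = ((AddChar.circleEquivComplex.symm ψ) x : ℂ) := by
    simp only [E, ofChar, AddMonoidHom.coe_mk, ZeroHom.coe_mk, toCircle_symm]
  have h2 : ((AddChar.circleEquivComplex.symm ψ) x : ℂ) = ψ x := rfl
  rw [h1, h2]
  exact hψ

/-- Fourier inversion / completeness of characters. -/
lemma sum_E_zero :
    ∑ ξ : G →+ AddCircle (1 : ℝ), E ξ (0 : G)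
      = (Fintype.card (G →+ AddCircle (1 : ℝ)) : ℂ) := by
  simp [E_zero]

lemma sum_E_ne {x : G} (hx : x ≠ 0) :
    ∑ ξ : G →+ AddCircle (1 : ℝ), E ξ x = 0 := by
    obtain ⟨ξ₀, hξ₀⟩ := exists_E_ne_one hx
    have key : ∑ ξ : G →+ AddCircle (1 : ℝ), E ξ x
        = E ξ₀ x * ∑ ξ : G →+ AddCircle (1 : ℝ), E ξ x := by
      conv_lhs => rw [← Fintype.sum_bijective (fun ξ => ξ₀ + ξ)
        (AddGroup.addLeft_bijective ξ₀) (fun ξ => E (ξ₀ + ξ) x) (fun ξ => E ξ x)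
        (fun ξ => rfl)]
      simp_rw [E_addchar, ← Finset.mul_sum]
    have h := sub_eq_zero.mpr key.symm
    rw [← sub_one_mul] at h
    rcases mul_eq_zero.mp h with h' | h'
    · exact absurd (sub_eq_zero.mp h') hξ₀
    · exact h'

end BogolyubovAux

namespace BogolyubovAux

open Complex Finset
open scoped ComplexConjugate

lemma re_toCircle_pos {y : AddCircle (1 : ℝ)} (hy : ‖y‖ < 1 / 4) :
    0 < ((AddCircle.toCircle y : ℂ)).re := by
  induction y using QuotientAddGroup.induction_on with
  | H r =>
    rw [AddCircle.norm_eq] at hy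
    simp only [inv_one, one_mul, mul_one] at hy
    have hr : (r : AddCircle (1 : ℝ)) = ((r - round r : ℝ) : AddCircle (1 : ℝ)) := by
      have h0 : ((round r : ℝ) : AddCircle (1 : ℝ)) = 0 := by
        have : ((round r : ℝ) : AddCircle (1 : ℝ)) = (round r) • ((1 : ℝ) : AddCircle (1 : ℝ)) := by
          rw [← QuotientAddGroup.mk_zsmul]
          norm_num
        rw [this, AddCircle.coe_period, smul_zero]
      have := congrArg (fun t => ((r : ℝ) : AddCircle (1 : ℝ)) - t) h0
      simpa [sub_eq_add_neg, ← QuotientAddGroup.mk_add] using this.symm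
    rw [hr, AddCircle.toCircle_apply_mk, Circle.coe_exp]
    set s : ℝ := r - round r with hs
    have : ((2 * Real.pi / 1 * s : ℝ) : ℂ) * Complex.I = ((2 * Real.pi * s : ℝ) : ℂ) * Complex.I := by
      norm_num
    rw [this, Complex.exp_ofReal_mul_I_re]
    apply Real.cos_pos_of_mem_Ioo
    constructor
    · nlinarith [Real.pi_pos, abs_lt.mp hy |>.1, abs_lt.mp hy |>.2]
    · nlinarith [Real.pi_pos, abs_lt.mp hy |>.1, abs_lt.mp hy |>.2]

end BogolyubovAux

set_option maxHeartbeats 2000000 in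
/-- **Bogolyubov's lemma**: if `A ⊆ G` satisfies `|A| ≥ δ|G|` then there is a set `S ⊆ Ĝ`
of at most `2δ^{-2}` characters such that `B(S, 1/4) ⊆ 2A - 2A`. -/
theorem bogolyubov {G : Type*} [AddCommGroup G] [Fintype G] (δ : ℝ) (hδ : 0 < δ)
    (A : Set G) (hA : δ * Fintype.card G ≤ (A.ncard : ℝ)) :
    ∃ S : Finset (G →+ AddCircle (1 : ℝ)),
      (S.card : ℝ) ≤ 2 * (δ ^ 2)⁻¹ ∧
      bohr S (1 / 4) ⊆
        {x | ∃ a₁ ∈ A, ∃ a₂ ∈ A, ∃ a₃ ∈ A, ∃ a₄ ∈ A, x = a₁ + a₂ - a₃ - a₄} := by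
  classical
  open BogolyubovAux Complex Finset in
  open scoped ComplexConjugate in
  -- Notation
  set n : ℕ := Fintype.card G with hn_def
  set M : ℕ := Fintype.card (G →+ AddCircle (1 : ℝ)) with hM_def
  set A' : Finset G := A.toFinset with hA'_def
  have hmemA' : ∀ a : G, a ∈ A' ↔ a ∈ A := fun a => Set.mem_toFinset
  have hcard : (A.ncard : ℝ) = (A'.card : ℝ) := by
    rw [Set.ncard_eq_toFinset_card' A]
  set c : ℝ := (A'.card : ℝ) with hc_def
  rw [hcard] at hA
  have hn_pos : (0 : ℝ) < n := by
    have : 0 < n := Fintype.card_pos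
    exact_mod_cast this
  have hc_pos : 0 < c := lt_of_lt_of_le (by positivity) hA
  have hc_le_n : c ≤ (n : ℝ) := by
    have := Finset.card_le_card (Finset.subset_univ A')
    simpa [hc_def, hn_def] using (Nat.cast_le (α := ℝ)).mpr this
  have hM_le_n : (M : ℝ) ≤ (n : ℝ) := by
    exact_mod_cast card_dual_le (G := G)
  have hδ1 : δ ≤ 1 := by
    nlinarith
  -- The Fourier coefficient and its modulus squared
  set F : (G →+ AddCircle (1 : ℝ)) → ℂ := fun ξ => ∑ a ∈ A', E ξ a with hF_def
  set m : (G →+ AddCircle (1 : ℝ)) → ℝ := fun ξ => Complex.normSq (F ξ) with hm_def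
  have hm_nonneg : ∀ ξ, 0 ≤ m ξ := fun ξ => Complex.normSq_nonneg _
  have conjF : ∀ ξ, conj (F ξ) = ∑ d ∈ A', E ξ (-d) := by
    intro ξ
    rw [hF_def]
    simp only [map_sum]
    exact Finset.sum_congr rfl fun d _ => conj_E ξ d
  have hmF : ∀ ξ, F ξ * conj (F ξ) = ((m ξ : ℝ) : ℂ) := fun ξ => Complex.mul_conj _
  -- Parseval
  have parsevalC : ∑ ξ, ((m ξ : ℝ) : ℂ) = ((M : ℝ) * c : ℝ) := by
    have expand : ∀ ξ : G →+ AddCircle (1 : ℝ),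
        ((m ξ : ℝ) : ℂ) = ∑ a ∈ A', ∑ d ∈ A', E ξ (a - d) := by
      intro ξ
      rw [← hmF, conjF, hF_def]
      rw [Finset.sum_mul_sum]
      exact Finset.sum_congr rfl fun a _ => Finset.sum_congr rfl fun d _ => by
        rw [← E_add, sub_eq_add_neg]
    simp_rw [expand]
    have inner : ∀ a ∈ A', ∑ d ∈ A', ∑ ξ : G →+ AddCircle (1 : ℝ), E ξ (a - d)
        = (M : ℂ) := by
      intro a ha
      have : ∀ d ∈ A', ∑ ξ : G →+ AddCircle (1 : ℝ), E ξ (a - d)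
          = if d = a then (M : ℂ) else 0 := by
        intro d _
        rcases eq_or_ne d a with rfl | hd
        · simp only [sub_self, if_pos rfl]
          exact sum_E_zero
        · rw [if_neg hd]
          exact sum_E_ne (sub_ne_zero.mpr (Ne.symm hd))
      rw [Finset.sum_congr rfl this, Finset.sum_ite_eq' A' a fun _ => (M : ℂ)]
      simp [ha]
    rw [Finset.sum_comm]
    have inner' : ∀ a ∈ A', ∑ ξ : G →+ AddCircle (1 : ℝ), ∑ d ∈ A', E ξ (a - d)
        = (M : ℂ) := by
      intro a ha
      rw [Finset.sum_comm]
      exact inner a ha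
    rw [Finset.sum_congr rfl inner']
    simp [hc_def, mul_comm]
  have parseval : ∑ ξ, m ξ = (M : ℝ) * c := by
    have := parsevalC
    rw [← Complex.ofReal_sum] at this
    exact_mod_cast this
  -- The spectrum
  set S : Finset (G →+ AddCircle (1 : ℝ)) :=
    Finset.univ.filter (fun ξ => δ / 2 * c ^ 2 ≤ m ξ) with hS_def
  refine ⟨S, ?_, ?_⟩
  · -- cardinality bound
    have h1 : (S.card : ℝ) * (δ / 2 * c ^ 2) ≤ ∑ ξ ∈ S, m ξ := by
      have := Finset.card_nsmul_le_sum S m (δ / 2 * c ^ 2)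
        (fun ξ hξ => (Finset.mem_filter.mp hξ).2)
      simpa [nsmul_eq_mul] using this
    have h2 : ∑ ξ ∈ S, m ξ ≤ ∑ ξ, m ξ :=
      Finset.sum_le_sum_of_subset_of_nonneg (Finset.subset_univ S)
        (fun ξ _ _ => hm_nonneg ξ)
    have h3 : (S.card : ℝ) * (δ / 2 * c ^ 2) ≤ (M : ℝ) * c := by
      rw [← parseval]; exact h1.trans h2
    have hs_nonneg : (0 : ℝ) ≤ S.card := Nat.cast_nonneg _
    rw [show (2 : ℝ) * (δ ^ 2)⁻¹ = 2 / δ ^ 2 by ring, le_div_iff₀ (by positivity)]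
    have e1 : (S.card : ℝ) * δ * c ^ 2 ≤ 2 * ((n : ℝ) * c) := by
      nlinarith [mul_le_mul_of_nonneg_right hM_le_n hc_pos.le]
    have e2 : (S.card : ℝ) * δ * c ≤ 2 * (n : ℝ) := by
      have := (mul_le_mul_iff_of_pos_right hc_pos).mpr (le_refl c)
      refine (mul_le_mul_iff_of_pos_right hc_pos).mp ?_
      nlinarith [e1]
    have e3 : (S.card : ℝ) * δ ^ 2 * (n : ℝ) ≤ 2 * (n : ℝ) := by
      calc (S.card : ℝ) * δ ^ 2 * (n : ℝ) = ((S.card : ℝ) * δ) * (δ * (n : ℝ)) := by ring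
        _ ≤ ((S.card : ℝ) * δ) * c :=
            mul_le_mul_of_nonneg_left hA (by positivity)
        _ = (S.card : ℝ) * δ * c := rfl
        _ ≤ 2 * (n : ℝ) := e2
    refine (mul_le_mul_iff_of_pos_right hn_pos).mp ?_
    nlinarith [e3]
  · -- Bohr set containment
    intro x hx
    by_contra hcon
    simp only [Set.mem_setOf_eq, not_exists, not_and] at hcon
    -- the quadruple sum vanishes
    have hK0 : ∑ ξ : G →+ AddCircle (1 : ℝ), F ξ ^ 2 * conj (F ξ) ^ 2 * E ξ (-x) = 0 := by
      have expand : ∀ ξ : G →+ AddCircle (1 : ℝ),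
          F ξ ^ 2 * conj (F ξ) ^ 2 * E ξ (-x)
            = ∑ p ∈ A' ×ˢ A', ∑ q ∈ A' ×ˢ A', E ξ (p.1 + p.2 - q.1 - q.2 - x) := by
        intro ξ
        have e1 : F ξ ^ 2 = ∑ p ∈ A' ×ˢ A', E ξ (p.1 + p.2) := by
          rw [sq, hF_def, Finset.sum_mul_sum, Finset.sum_product]
          exact Finset.sum_congr rfl fun a _ => Finset.sum_congr rfl fun b _ => (E_add ξ a b).symm
        have e2 : conj (F ξ) ^ 2 = ∑ q ∈ A' ×ˢ A', E ξ (-q.1 - q.2) := by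
          rw [sq, conjF, Finset.sum_mul_sum, Finset.sum_product]
          exact Finset.sum_congr rfl fun a _ => Finset.sum_congr rfl fun b _ => by
            rw [← E_add, sub_eq_add_neg]
        rw [e1, e2, Finset.sum_mul_sum]
        rw [Finset.sum_mul]
        refine Finset.sum_congr rfl fun p _ => ?_
        rw [Finset.sum_mul]
        refine Finset.sum_congr rfl fun q _ => ?_
        rw [← E_add, ← E_add]
        congr 1
        abel
      simp_rw [expand]
      rw [Finset.sum_comm]
      refine Finset.sum_eq_zero fun p hp => ?_
      rw [Finset.sum_comm]
      refine Finset.sum_eq_zero fun q hq => ?_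
      apply sum_E_ne
      intro h0
      have hxeq : x = p.1 + p.2 - q.1 - q.2 := (sub_eq_zero.mp h0).symm
      obtain ⟨hp1, hp2⟩ := Finset.mem_product.mp hp
      obtain ⟨hq1, hq2⟩ := Finset.mem_product.mp hq
      exact hcon p.1 ((hmemA' _).mp hp1) p.2 ((hmemA' _).mp hp2)
        q.1 ((hmemA' _).mp hq1) q.2 ((hmemA' _).mp hq2) hxeq
    -- take real parts
    have hterm : ∀ ξ : G →+ AddCircle (1 : ℝ),
        F ξ ^ 2 * conj (F ξ) ^ 2 * E ξ (-x) = ((m ξ ^ 2 : ℝ) : ℂ) * E ξ (-x) := by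
      intro ξ
      rw [← mul_pow, hmF, ← Complex.ofReal_pow]
    have hT0 : ∑ ξ : G →+ AddCircle (1 : ℝ), m ξ ^ 2 * (E ξ (-x)).re = 0 := by
      have h := hK0
      simp_rw [hterm] at h
      have := congrArg Complex.re h
      rw [Complex.re_sum] at this
      simp only [Complex.re_ofReal_mul] at this
      exact this
    -- positivity on the spectrum
    have hre_pos : ∀ ξ ∈ S, 0 < (E ξ (-x)).re := by
      intro ξ hξ
      have hnorm : ‖ξ x‖ < 1 / 4 := hx ξ hξ
      have : ‖ξ (-x)‖ < 1 / 4 := by rwa [map_neg, norm_neg]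
      exact re_toCircle_pos this
    have h0S : (0 : G →+ AddCircle (1 : ℝ)) ∈ S := by
      rw [hS_def, Finset.mem_filter]
      refine ⟨Finset.mem_univ _, ?_⟩
      have : m 0 = c ^ 2 := by
        have hF0 : F (0 : G →+ AddCircle (1 : ℝ)) = (c : ℂ) := by
          rw [hF_def]
          simp only [E_apply_zero, Finset.sum_const, nsmul_eq_mul, mul_one]
          norm_num [hc_def]
        show Complex.normSq (F 0) = c ^ 2
        rw [hF0, Complex.normSq_ofReal]
        ring
      rw [this]
      nlinarith
    have hm0 : m 0 = c ^ 2 := by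
      have hF0 : F (0 : G →+ AddCircle (1 : ℝ)) = (c : ℂ) := by
        rw [hF_def]
        simp only [E_apply_zero, Finset.sum_const, nsmul_eq_mul, mul_one]
        norm_num [hc_def]
      show Complex.normSq (F 0) = c ^ 2
      rw [hF0, Complex.normSq_ofReal]
      ring
    have hE0 : (E (0 : G →+ AddCircle (1 : ℝ)) (-x)).re = 1 := by
      rw [E_apply_zero]; simp
    have hmain : c ^ 4 ≤ ∑ ξ ∈ S, m ξ ^ 2 * (E ξ (-x)).re := by
      have := Finset.single_le_sum (f := fun ξ => m ξ ^ 2 * (E ξ (-x)).re)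
        (fun ξ hξ => mul_nonneg (sq_nonneg _) (hre_pos ξ hξ).le) h0S
      calc c ^ 4 = m 0 ^ 2 * (E (0 : G →+ AddCircle (1 : ℝ)) (-x)).re := by
            rw [hm0, hE0]; ring
        _ ≤ _ := this
    have htail : -(δ / 2 * c ^ 2 * ((M : ℝ) * c))
        ≤ ∑ ξ ∈ Finset.univ.filter (fun ξ => ¬(δ / 2 * c ^ 2 ≤ m ξ)),
            m ξ ^ 2 * (E ξ (-x)).re := by
      have step : ∀ ξ ∈ Finset.univ.filter (fun ξ => ¬(δ / 2 * c ^ 2 ≤ m ξ)),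
          -(δ / 2 * c ^ 2 * m ξ) ≤ m ξ ^ 2 * (E ξ (-x)).re := by
        intro ξ hξ
        have hlt : m ξ < δ / 2 * c ^ 2 := lt_of_not_ge (Finset.mem_filter.mp hξ).2
        have hre : -1 ≤ (E ξ (-x)).re := by
          have h1 : |(E ξ (-x)).re| ≤ ‖E ξ (-x)‖ := Complex.abs_re_le_norm _
          rw [E_abs] at h1
          linarith [abs_le.mp h1 |>.1]
        nlinarith [hm_nonneg ξ, sq_nonneg (m ξ)]
      calc -(δ / 2 * c ^ 2 * ((M : ℝ) * c))
          ≤ ∑ ξ ∈ Finset.univ.filter (fun ξ => ¬(δ / 2 * c ^ 2 ≤ m ξ)),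
              -(δ / 2 * c ^ 2 * m ξ) := by
            rw [Finset.sum_neg_distrib, ← Finset.mul_sum]
            have hsub : ∑ ξ ∈ Finset.univ.filter (fun ξ => ¬(δ / 2 * c ^ 2 ≤ m ξ)), m ξ
                ≤ (M : ℝ) * c := by
              rw [← parseval]
              exact Finset.sum_le_sum_of_subset_of_nonneg
                (Finset.filter_subset _ _) (fun ξ _ _ => hm_nonneg ξ)
            exact neg_le_neg (mul_le_mul_of_nonneg_left hsub (by positivity))
        _ ≤ _ := Finset.sum_le_sum step
    have hsplit := Finset.sum_filter_add_sum_filter_not Finset.univ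
      (fun ξ => δ / 2 * c ^ 2 ≤ m ξ) (fun ξ => m ξ ^ 2 * (E ξ (-x)).re)
    have hδM : δ * (M : ℝ) ≤ c :=
      le_trans (by nlinarith [mul_le_mul_of_nonneg_left hM_le_n hδ.le]) hA
    have hfin : δ / 2 * c ^ 2 * ((M : ℝ) * c) ≤ c ^ 4 / 2 := by
      nlinarith [mul_le_mul_of_nonneg_right hδM (pow_nonneg hc_pos.le 3)]
    have hc4 : 0 < c ^ 4 := by positivity
    rw [hT0] at hsplit
    linarith [hmain, htail, hfin]
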